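/- For the Thue–Morse sequence t : ℕ → {0,1} (where t_n is the parity of the sum of binary digits of n), for every ℓ ∈ ℕ and d = 2^ℓ − 1, we have t_d = t_{2d} = t_{3d} = ⋯ = t_{2^ℓ d}; moreover this common value is 1 if ℓ is odd and 0 if ℓ is even. -/
import Mathlib


/-- The Thue–Morse sequence: parity of the binary digit sum. -/
def thueMorse (n : ℕ) : ℕ := (Nat.digits 2 n).sum % 2

lemma s_two_mul (n : ℕ) : (Nat.digits 2 (2 * n)).sum = (Nat.digits 2 n).sum := by
  rcases Nat.eq_zero_or_pos n with h | h
  · simp [h]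
  · rw [Nat.digits_def' (by norm_num : (1:ℕ) < 2) (by omega)]
    simp [Nat.mul_div_cancel_left, Nat.mul_mod_right]

lemma s_two_mul_add_one (n : ℕ) :
    (Nat.digits 2 (2 * n + 1)).sum = (Nat.digits 2 n).sum + 1 := by
  rw [Nat.digits_def' (by norm_num : (1:ℕ) < 2) (by omega)]
  have h1 : (2 * n + 1) % 2 = 1 := by omega
  have h2 : (2 * n + 1) / 2 = n := by omega
  rw [h1, h2]; simp [Nat.add_comm]

lemma s_split (ℓ : ℕ) : ∀ a b : ℕ, b < 2 ^ ℓ →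
    (Nat.digits 2 (b + a * 2 ^ ℓ)).sum
      = (Nat.digits 2 b).sum + (Nat.digits 2 a).sum := by
  induction ℓ with
  | zero => intro a b hb
            interval_cases b
            simp
  | succ ℓ ih =>
      intro a b hb
      have hb2 : b / 2 < 2 ^ ℓ := by
        have : 2 ^ (ℓ + 1) = 2 * 2 ^ ℓ := by ring
        omega
      have key : b + a * 2 ^ (ℓ + 1) = 2 * (b / 2 + a * 2 ^ ℓ) + b % 2 := by
        have h : a * 2 ^ (ℓ + 1) = 2 * (a * 2 ^ ℓ) := by ring
        omega
      rcases Nat.mod_two_eq_zero_or_one b with h | h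
      · have hbb : b = 2 * (b / 2) := by omega
        have hsb : (Nat.digits 2 b).sum = (Nat.digits 2 (b / 2)).sum := by
          conv_lhs => rw [hbb]
          exact s_two_mul _
        rw [key, h, Nat.add_zero, s_two_mul, ih a (b / 2) hb2, hsb]
      · have hbb : b = 2 * (b / 2) + 1 := by omega
        have hsb : (Nat.digits 2 b).sum = (Nat.digits 2 (b / 2)).sum + 1 := by
          conv_lhs => rw [hbb]
          exact s_two_mul_add_one _
        rw [key, h, s_two_mul_add_one, ih a (b / 2) hb2, hsb]
        ring

lemma s_compl (ℓ : ℕ) : ∀ a : ℕ, a < 2 ^ ℓ →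
    (Nat.digits 2 (2 ^ ℓ - 1 - a)).sum + (Nat.digits 2 a).sum = ℓ := by
  induction ℓ with
  | zero => intro a ha
            interval_cases a
            simp
  | succ ℓ ih =>
      intro a ha
      have hpow : 2 ^ (ℓ + 1) = 2 * 2 ^ ℓ := by ring
      have ha2 : a / 2 < 2 ^ ℓ := by omega
      have ihh := ih (a / 2) ha2
      rcases Nat.mod_two_eq_zero_or_one a with h | h
      · have key : 2 ^ (ℓ + 1) - 1 - a = 2 * (2 ^ ℓ - 1 - a / 2) + 1 := by
          have h1 : 2 ^ ℓ ≥ 1 := Nat.one_le_two_pow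
          omega
        have haa : a = 2 * (a / 2) := by omega
        have hsa : (Nat.digits 2 a).sum = (Nat.digits 2 (a / 2)).sum := by
          conv_lhs => rw [haa]
          exact s_two_mul _
        rw [key, s_two_mul_add_one, hsa]
        omega
      · have key : 2 ^ (ℓ + 1) - 1 - a = 2 * (2 ^ ℓ - 1 - a / 2) := by
          have h1 : 2 ^ ℓ ≥ 1 := Nat.one_le_two_pow
          omega
        have haa : a = 2 * (a / 2) + 1 := by omega
        have hsa : (Nat.digits 2 a).sum = (Nat.digits 2 (a / 2)).sum + 1 := by
          conv_lhs => rw [haa]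
          exact s_two_mul_add_one _
        rw [key, s_two_mul, hsa]
        omega

theorem stmt_2 (ℓ : ℕ) :
    (∀ m : ℕ, 1 ≤ m → m ≤ 2 ^ ℓ →
      thueMorse (m * (2 ^ ℓ - 1)) = thueMorse (2 ^ ℓ - 1)) ∧
    thueMorse (2 ^ ℓ - 1) = if Odd ℓ then 1 else 0 := by
  have hpos : 1 ≤ 2 ^ ℓ := Nat.one_le_two_pow
  have hd : thueMorse (2 ^ ℓ - 1) = ℓ % 2 := by
    have h := s_compl ℓ 0 (by omega)
    simp at h
    simp [thueMorse, h]
  constructor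
  · intro m hm1 hm2
    have key : m * (2 ^ ℓ - 1) = (2 ^ ℓ - m) + (m - 1) * 2 ^ ℓ := by
      have h2 : (m - 1) * 2 ^ ℓ = m * 2 ^ ℓ - 1 * 2 ^ ℓ := by rw [Nat.sub_mul]
      have h3 : 2 ^ ℓ ≤ m * 2 ^ ℓ := Nat.le_mul_of_pos_left _ (by omega)
      rw [Nat.mul_sub]
      omega
    have hsplit := s_split ℓ (m - 1) (2 ^ ℓ - m) (by omega)
    have hc := s_compl ℓ (m - 1) (by omega)
    have he : 2 ^ ℓ - 1 - (m - 1) = 2 ^ ℓ - m := by omega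
    rw [he] at hc
    rw [hd]
    simp only [thueMorse, key, hsplit]
    omega
  · rw [hd]
    rcases Nat.even_or_odd ℓ with h | h
    · simp [Nat.not_odd_iff_even.mpr h, Nat.even_iff.mp h]
    · simp [h, Nat.odd_iff.mp h]
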